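/- Let the system F_j(x,u(x),Du_j(x),D²u_j(x)) = 0, j = 1,…,m₁+m₂, be degenerate elliptic and balanced quasi-monotone. If (u₁,u₂) and (v₁,v₂) are sub-super solutions in Ω, then the function (w₁,w₂) defined componentwise by w₁(x) = max(u₁(x),v₁(x)) and w₂(x) = min(u₂(x),v₂(x)) is also a sub-super solution in Ω. -/

import Mathlib

open Filter Topology Matrix Bornology

noncomputable section

/-- Euclidean space ℝⁿ. -/
abbrev En (n : ℕ) := EuclideanSpace ℝ (Fin n)

/-- n×n real matrices (the symmetric ones model 𝒮ⁿ). -/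
abbrev Symn (n : ℕ) := Matrix (Fin n) (Fin n) ℝ

/-- Loewner order: `X ≤ Y` iff `Y - X` is positive semidefinite. -/
def LoewnerLE {ι : Type*} [Fintype ι] (X Y : Matrix ι ι ℝ) : Prop := (Y - X).PosSemidef

/-- Upper semicontinuous envelope relative to Ω: f*(x) = limsup_{Ω ∋ y → x} f(y). -/
def uEnv {n : ℕ} (Ω : Set (En n)) (f : En n → ℝ) (x : En n) : ℝ := limsup f (𝓝[Ω] x)

/-- Lower semicontinuous envelope relative to Ω: f_*(x) = liminf_{Ω ∋ y → x} f(y). -/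
def lEnv {n : ℕ} (Ω : Set (En n)) (f : En n → ℝ) (x : En n) : ℝ := liminf f (𝓝[Ω] x)

/-- φ touches f from above at x (within Ω). -/
def TouchAbove {n : ℕ} (Ω : Set (En n)) (φ f : En n → ℝ) (x : En n) : Prop :=
  φ x = f x ∧ ∃ N : Set (En n), IsOpen N ∧ x ∈ N ∧ ∀ y ∈ (N ∩ Ω) \ {x}, f y < φ y

/-- φ touches f from below at x (within Ω). -/
def TouchBelow {n : ℕ} (Ω : Set (En n)) (φ f : En n → ℝ) (x : En n) : Prop :=
  φ x = f x ∧ ∃ N : Set (En n), IsOpen N ∧ x ∈ N ∧ ∀ y ∈ (N ∩ Ω) \ {x}, φ y < f y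

/-- Hessian matrix D²φ(x) of a scalar function. -/
def hess {n : ℕ} (φ : En n → ℝ) (x : En n) : Symn n :=
  Matrix.of fun i j =>
    iteratedFDeriv ℝ 2 φ x ![EuclideanSpace.single i 1, EuclideanSpace.single j 1]

/-- The type of the operators F_j(x, r, s, p, X). -/
abbrev Op (n m₁ m₂ : ℕ) :=
  En n → (Fin m₁ → ℝ) → (Fin m₂ → ℝ) → En n → Symn n → ℝ

/-- Continuity of an operator on Ω × ℝ^{m₁} × ℝ^{m₂} × ℝⁿ × 𝒮ⁿ. -/
def OpContinuousOn {n m₁ m₂ : ℕ} (Ω : Set (En n)) (F : Op n m₁ m₂) : Prop :=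
  ContinuousOn (fun q : En n × (Fin m₁ → ℝ) × (Fin m₂ → ℝ) × En n × Symn n =>
      F q.1 q.2.1 q.2.2.1 q.2.2.2.1 q.2.2.2.2)
    (Ω ×ˢ (Set.univ : Set ((Fin m₁ → ℝ) × (Fin m₂ → ℝ) × En n × Symn n)))

/-- Degenerate ellipticity of an operator. -/
def DegElliptic {n m₁ m₂ : ℕ} (Ω : Set (En n)) (F : Op n m₁ m₂) : Prop :=
  ∀ x ∈ Ω, ∀ (r : Fin m₁ → ℝ) (s : Fin m₂ → ℝ) (p : En n) (X Y : Symn n),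
    X.IsSymm → Y.IsSymm → LoewnerLE X Y → F x r s p Y ≤ F x r s p X

/-- Balanced quasi-monotonicity of the system (F1, F2). -/
def BalancedQM {n m₁ m₂ : ℕ} (Ω : Set (En n))
    (F1 : Fin m₁ → Op n m₁ m₂) (F2 : Fin m₂ → Op n m₁ m₂) : Prop :=
  (∀ j, ∀ x ∈ Ω, ∀ (r : Fin m₁ → ℝ) (s σ : Fin m₂ → ℝ) (p : En n) (X : Symn n), X.IsSymm →
      (∀ i, s i ≤ σ i) → F1 j x r s p X ≤ F1 j x r σ p X) ∧
  (∀ j, ∀ x ∈ Ω, ∀ (r ρ : Fin m₁ → ℝ) (s : Fin m₂ → ℝ) (p : En n) (X : Symn n), X.IsSymm →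
      (∀ i, r i ≤ ρ i) → r j = ρ j → F1 j x ρ s p X ≤ F1 j x r s p X) ∧
  (∀ j, ∀ x ∈ Ω, ∀ (r ρ : Fin m₁ → ℝ) (s : Fin m₂ → ℝ) (p : En n) (X : Symn n), X.IsSymm →
      (∀ i, r i ≤ ρ i) → F2 j x r s p X ≤ F2 j x ρ s p X) ∧
  (∀ j, ∀ x ∈ Ω, ∀ (r : Fin m₁ → ℝ) (s σ : Fin m₂ → ℝ) (p : En n) (X : Symn n), X.IsSymm →
      (∀ i, s i ≤ σ i) → s j = σ j → F2 j x r σ p X ≤ F2 j x r s p X)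

/-- Boundedness of a vector-valued function on Ω. -/
def BddOn {n m : ℕ} (Ω : Set (En n)) (u : En n → Fin m → ℝ) : Prop :=
  ∃ M : ℝ, ∀ x ∈ Ω, ∀ i, |u x i| ≤ M

/-- (u1, u2) is a super-sub solution of the system (F1, F2) in Ω. -/
def SuperSub {n m₁ m₂ : ℕ} (Ω : Set (En n))
    (F1 : Fin m₁ → Op n m₁ m₂) (F2 : Fin m₂ → Op n m₁ m₂)
    (u1 : En n → Fin m₁ → ℝ) (u2 : En n → Fin m₂ → ℝ) : Prop :=
  BddOn Ω u1 ∧ BddOn Ω u2 ∧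
  (∀ j, ∀ x ∈ Ω, ∀ φ : En n → ℝ, ContDiff ℝ 2 φ →
      TouchBelow Ω φ (lEnv Ω fun y => u1 y j) x →
      0 ≤ F1 j x (fun i => lEnv Ω (fun y => u1 y i) x) (fun i => uEnv Ω (fun y => u2 y i) x)
            (gradient φ x) (hess φ x)) ∧
  (∀ j, ∀ x ∈ Ω, ∀ φ : En n → ℝ, ContDiff ℝ 2 φ →
      TouchAbove Ω φ (uEnv Ω fun y => u2 y j) x →
      F2 j x (fun i => lEnv Ω (fun y => u1 y i) x) (fun i => uEnv Ω (fun y => u2 y i) x)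
          (gradient φ x) (hess φ x) ≤ 0)

/-- (u1, u2) is a sub-super solution of the system (F1, F2) in Ω. -/
def SubSuper {n m₁ m₂ : ℕ} (Ω : Set (En n))
    (F1 : Fin m₁ → Op n m₁ m₂) (F2 : Fin m₂ → Op n m₁ m₂)
    (u1 : En n → Fin m₁ → ℝ) (u2 : En n → Fin m₂ → ℝ) : Prop :=
  BddOn Ω u1 ∧ BddOn Ω u2 ∧
  (∀ j, ∀ x ∈ Ω, ∀ φ : En n → ℝ, ContDiff ℝ 2 φ →
      TouchAbove Ω φ (uEnv Ω fun y => u1 y j) x →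
      F1 j x (fun i => uEnv Ω (fun y => u1 y i) x) (fun i => lEnv Ω (fun y => u2 y i) x)
          (gradient φ x) (hess φ x) ≤ 0) ∧
  (∀ j, ∀ x ∈ Ω, ∀ φ : En n → ℝ, ContDiff ℝ 2 φ →
      TouchBelow Ω φ (lEnv Ω fun y => u2 y j) x →
      0 ≤ F2 j x (fun i => uEnv Ω (fun y => u1 y i) x) (fun i => lEnv Ω (fun y => u2 y i) x)
            (gradient φ x) (hess φ x))

section Aux

variable {n : ℕ} {Ω : Set (En n)} {x : En n}

lemma myNeBot (hx : x ∈ Ω) : (𝓝[Ω] x).NeBot :=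
  mem_closure_iff_nhdsWithin_neBot.mp (subset_closure hx)

lemma bdd_le {f : En n → ℝ} {M : ℝ} (hM : ∀ y ∈ Ω, |f y| ≤ M) (_hx : x ∈ Ω) :
    IsBoundedUnder (· ≤ ·) (𝓝[Ω] x) f :=
  ⟨M, eventually_map.mpr <| by filter_upwards [self_mem_nhdsWithin] with y hy using (abs_le.mp (hM y hy)).2⟩

lemma bdd_ge {f : En n → ℝ} {M : ℝ} (hM : ∀ y ∈ Ω, |f y| ≤ M) (_hx : x ∈ Ω) :
    IsBoundedUnder (· ≥ ·) (𝓝[Ω] x) f :=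
  ⟨-M, eventually_map.mpr <| by filter_upwards [self_mem_nhdsWithin] with y hy using (abs_le.mp (hM y hy)).1⟩

lemma uEnv_mono {f g : En n → ℝ} {Mf Mg : ℝ} (hMf : ∀ y ∈ Ω, |f y| ≤ Mf)
    (hMg : ∀ y ∈ Ω, |g y| ≤ Mg) (hx : x ∈ Ω) (hfg : ∀ y ∈ Ω, f y ≤ g y) :
    uEnv Ω f x ≤ uEnv Ω g x := by
  haveI := myNeBot hx
  exact limsup_le_limsup
    (by filter_upwards [self_mem_nhdsWithin] with y hy using hfg y hy)
    ((bdd_ge hMf hx).isCoboundedUnder_le) (bdd_le hMg hx)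

lemma lEnv_mono {f g : En n → ℝ} {Mf Mg : ℝ} (hMf : ∀ y ∈ Ω, |f y| ≤ Mf)
    (hMg : ∀ y ∈ Ω, |g y| ≤ Mg) (hx : x ∈ Ω) (hfg : ∀ y ∈ Ω, f y ≤ g y) :
    lEnv Ω f x ≤ lEnv Ω g x := by
  haveI := myNeBot hx
  exact liminf_le_liminf
    (by filter_upwards [self_mem_nhdsWithin] with y hy using hfg y hy)
    (bdd_ge hMf hx) ((bdd_le hMg hx).isCoboundedUnder_ge)

lemma uEnv_max {f g : En n → ℝ} {Mf Mg : ℝ} (hMf : ∀ y ∈ Ω, |f y| ≤ Mf)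
    (hMg : ∀ y ∈ Ω, |g y| ≤ Mg) (hx : x ∈ Ω) :
    uEnv Ω (fun y => max (f y) (g y)) x = max (uEnv Ω f x) (uEnv Ω g x) := by
  haveI := myNeBot hx
  exact limsup_max ((bdd_ge hMf hx).isCoboundedUnder_le)
    ((bdd_ge hMg hx).isCoboundedUnder_le) (bdd_le hMf hx) (bdd_le hMg hx)

lemma lEnv_min {f g : En n → ℝ} {Mf Mg : ℝ} (hMf : ∀ y ∈ Ω, |f y| ≤ Mf)
    (hMg : ∀ y ∈ Ω, |g y| ≤ Mg) (hx : x ∈ Ω) :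
    lEnv Ω (fun y => min (f y) (g y)) x = min (lEnv Ω f x) (lEnv Ω g x) := by
  haveI := myNeBot hx
  exact liminf_min ((bdd_le hMf hx).isCoboundedUnder_ge)
    ((bdd_le hMg hx).isCoboundedUnder_ge) (bdd_ge hMf hx) (bdd_ge hMg hx)

lemma hess_isSymm {φ : En n → ℝ} (hφ : ContDiff ℝ 2 φ) (x : En n) : (hess φ x).IsSymm := by
  have hs : IsSymmSndFDerivAt ℝ φ x := (hφ.contDiffAt).isSymmSndFDerivAt (by simp [minSmoothness_of_isRCLikeNormedField])
  rw [Matrix.IsSymm]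
  ext i j
  simp only [Matrix.transpose_apply, hess, Matrix.of_apply, iteratedFDeriv_two_apply,
    Matrix.cons_val_zero, Matrix.cons_val_one, Matrix.head_cons]
  exact hs _ _

end Aux

section Clauses

variable {n m₁ m₂ : ℕ} {Ω : Set (En n)}
    {F1 : Fin m₁ → Op n m₁ m₂} {F2 : Fin m₂ → Op n m₁ m₂}
    {u1 v1 w1 : En n → Fin m₁ → ℝ} {u2 v2 w2 : En n → Fin m₂ → ℝ}
    {Mu1 Mv1 Mu2 Mv2 : ℝ}

lemma clause1_aux (hQM : BalancedQM Ω F1 F2)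
    (hMu1 : ∀ y ∈ Ω, ∀ i, |u1 y i| ≤ Mu1) (hMv1 : ∀ y ∈ Ω, ∀ i, |v1 y i| ≤ Mv1)
    (hMu2 : ∀ y ∈ Ω, ∀ i, |u2 y i| ≤ Mu2) (hMv2 : ∀ y ∈ Ω, ∀ i, |v2 y i| ≤ Mv2)
    (hw1 : ∀ y i, w1 y i = max (u1 y i) (v1 y i))
    (hw2 : ∀ y i, w2 y i = min (u2 y i) (v2 y i))
    (hu3 : ∀ j, ∀ x ∈ Ω, ∀ φ : En n → ℝ, ContDiff ℝ 2 φ →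
      TouchAbove Ω φ (uEnv Ω fun y => u1 y j) x →
      F1 j x (fun i => uEnv Ω (fun y => u1 y i) x) (fun i => lEnv Ω (fun y => u2 y i) x)
          (gradient φ x) (hess φ x) ≤ 0)
    (j : Fin m₁) (x : En n) (hx : x ∈ Ω) (φ : En n → ℝ) (hφ : ContDiff ℝ 2 φ)
    (ht : TouchAbove Ω φ (uEnv Ω fun y => w1 y j) x)
    (hcase : uEnv Ω (fun y => v1 y j) x ≤ uEnv Ω (fun y => u1 y j) x) :
    F1 j x (fun i => uEnv Ω (fun y => w1 y i) x) (fun i => lEnv Ω (fun y => w2 y i) x)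
        (gradient φ x) (hess φ x) ≤ 0 := by
  have hMw1 : ∀ i, ∀ y ∈ Ω, |w1 y i| ≤ max Mu1 Mv1 := fun i y hy => by
    rw [hw1]
    exact abs_max_le_max_abs_abs.trans
      (max_le_max (hMu1 y hy i) (hMv1 y hy i))
  have hMw2 : ∀ i, ∀ y ∈ Ω, |w2 y i| ≤ max Mu2 Mv2 := fun i y hy => by
    rw [hw2]
    exact abs_min_le_max_abs_abs.trans
      (max_le_max (hMu2 y hy i) (hMv2 y hy i))
  have hEq : ∀ y ∈ Ω, ∀ i, uEnv Ω (fun z => w1 z i) y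
      = max (uEnv Ω (fun z => u1 z i) y) (uEnv Ω (fun z => v1 z i) y) := by
    intro y hy i
    have h : (fun z => w1 z i) = fun z => max (u1 z i) (v1 z i) := funext fun z => hw1 z i
    rw [h]
    exact uEnv_max (fun z hz => hMu1 z hz i) (fun z hz => hMv1 z hz i) hy
  have hjx : uEnv Ω (fun z => w1 z j) x = uEnv Ω (fun z => u1 z j) x := by
    rw [hEq x hx j, max_eq_left hcase]
  have hmono1 : ∀ y ∈ Ω, ∀ i, uEnv Ω (fun z => u1 z i) y ≤ uEnv Ω (fun z => w1 z i) y := by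
    intro y hy i
    exact uEnv_mono (fun z hz => hMu1 z hz i) (hMw1 i) hy
      (fun z hz => by rw [hw1]; exact le_max_left _ _)
  have hmono2 : ∀ i, lEnv Ω (fun z => w2 z i) x ≤ lEnv Ω (fun z => u2 z i) x := by
    intro i
    exact lEnv_mono (hMw2 i) (fun z hz => hMu2 z hz i) hx
      (fun z hz => by rw [hw2]; exact min_le_left _ _)
  obtain ⟨heq0, N, hNo, hxN, hN⟩ := ht
  have ht' : TouchAbove Ω φ (uEnv Ω fun y => u1 y j) x :=
    ⟨heq0.trans hjx, N, hNo, hxN,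
      fun y hy => lt_of_le_of_lt (hmono1 y hy.1.2 j) (hN y hy)⟩
  have h0 := hu3 j x hx φ hφ ht'
  obtain ⟨qm1, qm2, qm3, qm4⟩ := hQM
  have hsym := hess_isSymm hφ x
  calc F1 j x (fun i => uEnv Ω (fun y => w1 y i) x) (fun i => lEnv Ω (fun y => w2 y i) x)
        (gradient φ x) (hess φ x)
      ≤ F1 j x (fun i => uEnv Ω (fun y => u1 y i) x) (fun i => lEnv Ω (fun y => w2 y i) x)
        (gradient φ x) (hess φ x) :=
        qm2 j x hx _ _ _ _ _ hsym (fun i => hmono1 x hx i) hjx.symm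
    _ ≤ F1 j x (fun i => uEnv Ω (fun y => u1 y i) x) (fun i => lEnv Ω (fun y => u2 y i) x)
        (gradient φ x) (hess φ x) :=
        qm1 j x hx _ _ _ _ _ hsym hmono2
    _ ≤ 0 := h0

lemma clause2_aux (hQM : BalancedQM Ω F1 F2)
    (hMu1 : ∀ y ∈ Ω, ∀ i, |u1 y i| ≤ Mu1) (hMv1 : ∀ y ∈ Ω, ∀ i, |v1 y i| ≤ Mv1)
    (hMu2 : ∀ y ∈ Ω, ∀ i, |u2 y i| ≤ Mu2) (hMv2 : ∀ y ∈ Ω, ∀ i, |v2 y i| ≤ Mv2)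
    (hw1 : ∀ y i, w1 y i = max (u1 y i) (v1 y i))
    (hw2 : ∀ y i, w2 y i = min (u2 y i) (v2 y i))
    (hu4 : ∀ j, ∀ x ∈ Ω, ∀ φ : En n → ℝ, ContDiff ℝ 2 φ →
      TouchBelow Ω φ (lEnv Ω fun y => u2 y j) x →
      0 ≤ F2 j x (fun i => uEnv Ω (fun y => u1 y i) x) (fun i => lEnv Ω (fun y => u2 y i) x)
            (gradient φ x) (hess φ x))
    (j : Fin m₂) (x : En n) (hx : x ∈ Ω) (φ : En n → ℝ) (hφ : ContDiff ℝ 2 φ)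
    (ht : TouchBelow Ω φ (lEnv Ω fun y => w2 y j) x)
    (hcase : lEnv Ω (fun y => u2 y j) x ≤ lEnv Ω (fun y => v2 y j) x) :
    0 ≤ F2 j x (fun i => uEnv Ω (fun y => w1 y i) x) (fun i => lEnv Ω (fun y => w2 y i) x)
        (gradient φ x) (hess φ x) := by
  have hMw1 : ∀ i, ∀ y ∈ Ω, |w1 y i| ≤ max Mu1 Mv1 := fun i y hy => by
    rw [hw1]
    exact abs_max_le_max_abs_abs.trans
      (max_le_max (hMu1 y hy i) (hMv1 y hy i))
  have hMw2 : ∀ i, ∀ y ∈ Ω, |w2 y i| ≤ max Mu2 Mv2 := fun i y hy => by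
    rw [hw2]
    exact abs_min_le_max_abs_abs.trans
      (max_le_max (hMu2 y hy i) (hMv2 y hy i))
  have hEq : ∀ y ∈ Ω, ∀ i, lEnv Ω (fun z => w2 z i) y
      = min (lEnv Ω (fun z => u2 z i) y) (lEnv Ω (fun z => v2 z i) y) := by
    intro y hy i
    have h : (fun z => w2 z i) = fun z => min (u2 z i) (v2 z i) := funext fun z => hw2 z i
    rw [h]
    exact lEnv_min (fun z hz => hMu2 z hz i) (fun z hz => hMv2 z hz i) hy
  have hjx : lEnv Ω (fun z => w2 z j) x = lEnv Ω (fun z => u2 z j) x := by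
    rw [hEq x hx j, min_eq_left hcase]
  have hmono2 : ∀ y ∈ Ω, ∀ i, lEnv Ω (fun z => w2 z i) y ≤ lEnv Ω (fun z => u2 z i) y := by
    intro y hy i
    exact lEnv_mono (hMw2 i) (fun z hz => hMu2 z hz i) hy
      (fun z hz => by rw [hw2]; exact min_le_left _ _)
  have hmono1 : ∀ i, uEnv Ω (fun z => u1 z i) x ≤ uEnv Ω (fun z => w1 z i) x := by
    intro i
    exact uEnv_mono (fun z hz => hMu1 z hz i) (hMw1 i) hx
      (fun z hz => by rw [hw1]; exact le_max_left _ _)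
  obtain ⟨heq0, N, hNo, hxN, hN⟩ := ht
  have ht' : TouchBelow Ω φ (lEnv Ω fun y => u2 y j) x :=
    ⟨heq0.trans hjx, N, hNo, hxN,
      fun y hy => lt_of_lt_of_le (hN y hy) (hmono2 y hy.1.2 j)⟩
  have h0 := hu4 j x hx φ hφ ht'
  obtain ⟨qm1, qm2, qm3, qm4⟩ := hQM
  have hsym := hess_isSymm hφ x
  calc (0:ℝ)
      ≤ F2 j x (fun i => uEnv Ω (fun y => u1 y i) x) (fun i => lEnv Ω (fun y => u2 y i) x)
        (gradient φ x) (hess φ x) := h0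
    _ ≤ F2 j x (fun i => uEnv Ω (fun y => w1 y i) x) (fun i => lEnv Ω (fun y => u2 y i) x)
        (gradient φ x) (hess φ x) :=
        qm3 j x hx _ _ _ _ _ hsym hmono1
    _ ≤ F2 j x (fun i => uEnv Ω (fun y => w1 y i) x) (fun i => lEnv Ω (fun y => w2 y i) x)
        (gradient φ x) (hess φ x) :=
        qm4 j x hx _ _ _ _ _ hsym (fun i => hmono2 x hx i) hjx
    _ = _ := rfl

end Clauses

/-- the componentwise (max, min) of two sub-super solutions of a degenerate
elliptic, balanced quasi-monotone system is again a sub-super solution. -/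
theorem max_min_subSuper {n m₁ m₂ : ℕ} (hm₁ : 1 ≤ m₁)
    (Ω : Set (En n)) (hΩo : IsOpen Ω) (hΩb : IsBounded Ω)
    (F1 : Fin m₁ → Op n m₁ m₂) (F2 : Fin m₂ → Op n m₁ m₂)
    (hF1c : ∀ j, OpContinuousOn Ω (F1 j)) (hF2c : ∀ j, OpContinuousOn Ω (F2 j))
    (hF1e : ∀ j, DegElliptic Ω (F1 j)) (hF2e : ∀ j, DegElliptic Ω (F2 j))
    (hQM : BalancedQM Ω F1 F2)
    (u1 v1 : En n → Fin m₁ → ℝ) (u2 v2 : En n → Fin m₂ → ℝ)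
    (hu : SubSuper Ω F1 F2 u1 u2) (hv : SubSuper Ω F1 F2 v1 v2) :
    SubSuper Ω F1 F2 (fun x j => max (u1 x j) (v1 x j)) (fun x j => min (u2 x j) (v2 x j)) := by
  obtain ⟨⟨Mu1, hMu1⟩, ⟨Mu2, hMu2⟩, hu3, hu4⟩ := hu
  obtain ⟨⟨Mv1, hMv1⟩, ⟨Mv2, hMv2⟩, hv3, hv4⟩ := hv
  refine ⟨⟨max Mu1 Mv1, fun x hx i => ?_⟩, ⟨max Mu2 Mv2, fun x hx i => ?_⟩, ?_, ?_⟩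
  · exact abs_max_le_max_abs_abs.trans (max_le_max (hMu1 x hx i) (hMv1 x hx i))
  · exact abs_min_le_max_abs_abs.trans (max_le_max (hMu2 x hx i) (hMv2 x hx i))
  · intro j x hx φ hφ ht
    rcases le_total (uEnv Ω (fun y => v1 y j) x) (uEnv Ω (fun y => u1 y j) x) with hc | hc
    · exact clause1_aux hQM hMu1 hMv1 hMu2 hMv2 (fun y i => rfl) (fun y i => rfl)
        hu3 j x hx φ hφ ht hc
    · exact clause1_aux hQM hMv1 hMu1 hMv2 hMu2 (fun y i => max_comm (u1 y i) (v1 y i))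
        (fun y i => min_comm (u2 y i) (v2 y i)) hv3 j x hx φ hφ ht hc
  · intro j x hx φ hφ ht
    rcases le_total (lEnv Ω (fun y => u2 y j) x) (lEnv Ω (fun y => v2 y j) x) with hc | hc
    · exact clause2_aux hQM hMu1 hMv1 hMu2 hMv2 (fun y i => rfl) (fun y i => rfl)
        hu4 j x hx φ hφ ht hc
    · exact clause2_aux hQM hMv1 hMu1 hMv2 hMu2 (fun y i => max_comm (u1 y i) (v1 y i))
        (fun y i => min_comm (u2 y i) (v2 y i)) hv4 j x hx φ hφ ht hc
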